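/- Let M be an m×m column-stochastic real matrix which is primitive. Then: (i) 1 is an eigenvalue of M; (ii) there exists an eigenvector v₁ of M for the eigenvalue 1 all of whose components are strictly positive and sum to 1; (iii) the eigenspace of M for the eigenvalue 1 is one-dimensional; and (iv) every complex eigenvalue λ ≠ 1 of M satisfies |λ| < 1. -/

import Mathlib

open Matrix

section PFhelpers

lemma pf_sum_mulVec {m : ℕ} (M : Matrix (Fin m) (Fin m) ℝ)
    (hM_cols : ∀ j, ∑ i, M i j = 1) (v : Fin m → ℝ) :
    ∑ i, M.mulVec v i = ∑ j, v j := by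
  simp only [Matrix.mulVec, dotProduct]
  rw [Finset.sum_comm]
  simp_rw [← Finset.sum_mul, hM_cols, one_mul]

lemma pf_col_stoch_pow {m : ℕ} (M : Matrix (Fin m) (Fin m) ℝ)
    (hM_cols : ∀ j, ∑ i, M i j = 1) : ∀ n j, ∑ i, (M ^ n) i j = 1 := by
  intro n
  induction n with
  | zero => intro j; simp [Matrix.one_apply, Finset.sum_ite_eq]
  | succ k ih =>
    intro j
    rw [pow_succ]
    simp only [Matrix.mul_apply]
    rw [Finset.sum_comm]
    simp_rw [← Finset.sum_mul, ih, one_mul]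
    exact hM_cols j

lemma pf_eq_of_le_of_sum_le {m : ℕ} {f g : Fin m → ℝ} (h : ∀ i, f i ≤ g i)
    (hs : ∑ i, g i ≤ ∑ i, f i) : ∀ i, f i = g i := by
  by_contra hc
  push_neg at hc
  obtain ⟨i, hi⟩ := hc
  have : ∑ i, f i < ∑ i, g i :=
    Finset.sum_lt_sum (fun j _ => h j) ⟨i, Finset.mem_univ i, lt_of_le_of_ne (h i) hi⟩
  linarith

lemma pf_pos_of_fixed {m : ℕ} {A : Matrix (Fin m) (Fin m) ℝ} (hA : ∀ i j, 0 < A i j)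
    {u : Fin m → ℝ} (hu : A.mulVec u = u) (hnn : ∀ i, 0 ≤ u i) (hne : u ≠ 0) :
    ∀ i, 0 < u i := by
  obtain ⟨j, hj⟩ : ∃ j, 0 < u j := by
    by_contra h
    push_neg at h
    exact hne (funext fun k => le_antisymm (h k) (hnn k))
  intro i
  rw [← hu]
  exact Finset.sum_pos' (fun k _ => mul_nonneg (hA i k).le (hnn k))
    ⟨j, Finset.mem_univ j, mul_pos (hA i j) hj⟩

lemma pf_pow_fixed {m : ℕ} {A : Matrix (Fin m) (Fin m) ℝ} {u : Fin m → ℝ}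
    (hu : A.mulVec u = u) : ∀ n, (A ^ n).mulVec u = u := by
  intro n
  induction n with
  | zero => simp
  | succ k ih => rw [pow_succ, ← Matrix.mulVec_mulVec, hu, ih]

lemma pf_abs_fixed {m : ℕ} {M : Matrix (Fin m) (Fin m) ℝ}
    (hnn : ∀ i j, 0 ≤ M i j) (hcols : ∀ j, ∑ i, M i j = 1)
    {v : Fin m → ℝ} (hv : M.mulVec v = v) :
    M.mulVec (fun i => |v i|) = fun i => |v i| := by
  set u : Fin m → ℝ := fun i => |v i| with hu
  have hle : ∀ i, u i ≤ M.mulVec u i := by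
    intro i
    have h1 : |M.mulVec v i| ≤ M.mulVec u i := by
      simp only [Matrix.mulVec, dotProduct, hu]
      calc |∑ j, M i j * v j| ≤ ∑ j, |M i j * v j| := Finset.abs_sum_le_sum_abs _ _
        _ = ∑ j, M i j * |v j| := by
            refine Finset.sum_congr rfl fun j _ => ?_
            rw [abs_mul, abs_of_nonneg (hnn i j)]
    rw [hv] at h1
    exact h1
  have hsum : ∑ i, M.mulVec u i ≤ ∑ i, u i := le_of_eq (pf_sum_mulVec M hcols u)
  funext i
  exact (pf_eq_of_le_of_sum_le hle hsum i).symm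

lemma pf_key_complex {m : ℕ} (A : Matrix (Fin m) (Fin m) ℝ)
    (hpos : ∀ i j, 0 < A i j) (hcols : ∀ j, ∑ i, A i j = 1)
    (μ : ℂ) (z : Fin m → ℂ) (hz0 : z ≠ 0)
    (hz : (A.map (algebraMap ℝ ℂ)).mulVec z = μ • z) :
    ‖μ‖ ≤ 1 ∧ (‖μ‖ = 1 → μ = 1) := by
  set u : Fin m → ℝ := fun i => ‖z i‖ with hu_def
  obtain ⟨j₀, hj₀⟩ : ∃ j, z j ≠ 0 := Function.ne_iff.mp hz0
  have hS : 0 < ∑ i, u i :=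
    Finset.sum_pos' (fun i _ => norm_nonneg _)
      ⟨j₀, Finset.mem_univ j₀, by simpa [hu_def] using hj₀⟩
  -- coordinate form of hz
  have hzc : ∀ i, ∑ j, (A i j : ℂ) * z j = μ * z i := by
    intro i
    have := congrFun hz i
    simpa [Matrix.mulVec, dotProduct, Matrix.map_apply] using this
  have hle : ∀ i, ‖μ‖ * u i ≤ A.mulVec u i := by
    intro i
    have h1 : ‖∑ j, (A i j : ℂ) * z j‖ ≤ A.mulVec u i := by
      simp only [Matrix.mulVec, dotProduct, hu_def]
      calc ‖∑ j, (A i j : ℂ) * z j‖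
          ≤ ∑ j, ‖(A i j : ℂ) * z j‖ := norm_sum_le _ _
        _ = ∑ j, A i j * ‖z j‖ := by
            refine Finset.sum_congr rfl fun j _ => ?_
            rw [norm_mul, Complex.norm_real, Real.norm_eq_abs, abs_of_pos (hpos i j)]
    rw [hzc i, norm_mul] at h1
    exact h1
  have hAu : ∑ i, A.mulVec u i = ∑ i, u i := pf_sum_mulVec A hcols u
  have habs_le : ‖μ‖ ≤ 1 := by
    have : ‖μ‖ * ∑ i, u i ≤ ∑ i, u i := by
      calc ‖μ‖ * ∑ i, u i = ∑ i, ‖μ‖ * u i := Finset.mul_sum _ _ _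
        _ ≤ ∑ i, A.mulVec u i := Finset.sum_le_sum fun i _ => hle i
        _ = ∑ i, u i := hAu
    nlinarith
  refine ⟨habs_le, fun habs => ?_⟩
  -- equality case
  have heq : ∀ i, A.mulVec u i = u i := by
    have h := pf_eq_of_le_of_sum_le (f := fun i => ‖μ‖ * u i) (g := A.mulVec u)
      hle (by rw [hAu]; simp [habs])
    intro i
    have h2 := h i
    simp only [habs, one_mul] at h2
    exact h2.symm
  have hupos : ∀ i, 0 < u i :=
    pf_pos_of_fixed hpos (funext heq)
      (fun i => norm_nonneg _)
      (fun h => hj₀ (by simpa [hu_def, norm_eq_zero] using congrFun h j₀))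
  have hzne : ∀ i, z i ≠ 0 := fun i =>
    norm_ne_zero_iff.mp (ne_of_gt (hupos i))
  -- termwise equality of triangle inequality in row j₀
  have hrow : ‖∑ j, (A j₀ j : ℂ) * z j‖ = ∑ j, ‖(A j₀ j : ℂ) * z j‖ := by
    rw [hzc j₀, norm_mul, habs, one_mul]
    have : ∑ j, ‖(A j₀ j : ℂ) * z j‖ = A.mulVec u j₀ := by
      simp only [Matrix.mulVec, dotProduct, hu_def]
      refine Finset.sum_congr rfl fun j _ => ?_
      rw [norm_mul, Complex.norm_real, Real.norm_eq_abs, abs_of_pos (hpos j₀ j)]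
    rw [this, heq j₀]
  -- all z k are positive multiples of z j₀
  have hray : ∀ k, ∃ ρ : ℝ, 0 < ρ ∧ z k = (ρ : ℂ) * z j₀ := by
    intro k
    by_cases hk : k = j₀
    · exact ⟨1, one_pos, by simp [hk]⟩
    · set w : Fin m → ℂ := fun j => (A j₀ j : ℂ) * z j with hw
      have hwne : ∀ j, w j ≠ 0 := fun j =>
        mul_ne_zero (by exact_mod_cast (hpos j₀ j).ne') (hzne j)
      have hmem : k ∈ Finset.univ.erase j₀ := Finset.mem_erase.mpr ⟨hk, Finset.mem_univ k⟩
      have hsplit : ∑ j, ‖w j‖ = ‖w j₀‖ + (‖w k‖ + ∑ j ∈ (Finset.univ.erase j₀).erase k, ‖w j‖) := by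
        rw [← Finset.add_sum_erase _ (fun j => ‖w j‖) (Finset.mem_univ j₀),
          ← Finset.add_sum_erase _ (fun j => ‖w j‖) hmem]
      have hsplitw : ∑ j, w j = w j₀ + (w k + ∑ j ∈ (Finset.univ.erase j₀).erase k, w j) := by
        rw [← Finset.add_sum_erase _ w (Finset.mem_univ j₀), ← Finset.add_sum_erase _ w hmem]
      have hge : ‖w j₀‖ + ‖w k‖ ≤ ‖w j₀ + w k‖ := by
        have h1 : ‖∑ j, w j‖ ≤ ‖w j₀ + w k‖ + ∑ j ∈ (Finset.univ.erase j₀).erase k, ‖w j‖ := by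
          rw [hsplitw, ← add_assoc]
          calc ‖w j₀ + w k + ∑ j ∈ (Finset.univ.erase j₀).erase k, w j‖
              ≤ ‖w j₀ + w k‖ + ‖∑ j ∈ (Finset.univ.erase j₀).erase k, w j‖ := norm_add_le _ _
            _ ≤ ‖w j₀ + w k‖ + ∑ j ∈ (Finset.univ.erase j₀).erase k, ‖w j‖ := by
                exact add_le_add le_rfl (norm_sum_le _ _)
        have h2 : ‖∑ j, w j‖ = ∑ j, ‖w j‖ := by
          simpa [hw] using hrow
        rw [h2, hsplit] at h1
        linarith
      have hpair : ‖w j₀ + w k‖ = ‖w j₀‖ + ‖w k‖ := le_antisymm (norm_add_le _ _) hge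
      have hsr : SameRay ℝ (w j₀) (w k) := sameRay_iff_norm_add.mpr hpair
      obtain ⟨r, hr, hrw⟩ := hsr.exists_pos_left (hwne j₀) (hwne k)
      -- hrw : r • w j₀ = w k
      refine ⟨r * A j₀ j₀ / A j₀ k, ?_, ?_⟩
      · exact div_pos (mul_pos hr (hpos j₀ j₀)) (hpos j₀ k)
      · have h3 : (r : ℂ) * ((A j₀ j₀ : ℂ) * z j₀) = (A j₀ k : ℂ) * z k := by
          simpa [hw, Complex.real_smul] using hrw
        have hAk : (A j₀ k : ℂ) ≠ 0 := by exact_mod_cast (hpos j₀ k).ne'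
        push_cast
        rw [div_mul_eq_mul_div, eq_div_iff hAk]
        linear_combination -h3
  choose ρ hρpos hρ using hray
  have hμ : ((∑ j, A j₀ j * ρ j : ℝ) : ℂ) = μ := by
    have h := hzc j₀
    have hsub : ∑ j, (A j₀ j : ℂ) * z j = ((∑ j, A j₀ j * ρ j : ℝ) : ℂ) * z j₀ := by
      push_cast
      rw [Finset.sum_mul]
      refine Finset.sum_congr rfl fun j _ => ?_
      rw [hρ j]; ring
    rw [hsub] at h
    exact mul_right_cancel₀ (hzne j₀) h
  have hc_pos : 0 < ∑ j, A j₀ j * ρ j :=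
    Finset.sum_pos (fun j _ => mul_pos (hpos j₀ j) (hρpos j)) ⟨j₀, Finset.mem_univ j₀⟩
  have hone : |∑ j, A j₀ j * ρ j| = 1 := by
    rw [← Real.norm_eq_abs, ← Complex.norm_real, hμ, habs]
  rw [abs_of_pos hc_pos] at hone
  rw [← hμ, hone]
  norm_num

end PFhelpers

/-- A square nonnegative real matrix is primitive if some power of it has all
entries strictly positive. -/
def Primitive {k : Type*} [Fintype k] [DecidableEq k] (A : Matrix k k ℝ) : Prop :=
  ∃ n, 1 ≤ n ∧ ∀ i j, 0 < (A ^ n) i j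

/-- **Perron–Frobenius for primitive column-stochastic matrices.**
(i) `1` is an eigenvalue; (ii) there is an eigenvector for `1` with strictly positive
components summing to one; (iii) the eigenspace for `1` is one-dimensional; (iv) every
other complex eigenvalue has modulus strictly less than one. -/
theorem perron_frobenius_column_stochastic
    (m : ℕ) (hm : 0 < m)
    (M : Matrix (Fin m) (Fin m) ℝ)
    (hM_nonneg : ∀ i j, 0 ≤ M i j)
    (hM_cols : ∀ j, ∑ i, M i j = 1)
    (hM_prim : Primitive M) :
    (1 : ℝ) ∈ spectrum ℝ M ∧
    (∃ v₁ : Fin m → ℝ, M.mulVec v₁ = v₁ ∧ (∀ i, 0 < v₁ i) ∧ ∑ i, v₁ i = 1) ∧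
    Module.finrank ℝ (Module.End.eigenspace (Matrix.mulVecLin M) 1) = 1 ∧
    (∀ lam : ℂ, lam ∈ spectrum ℂ (M.map (algebraMap ℝ ℂ)) → lam ≠ 1 →
      ‖lam‖ < 1) := by
  obtain ⟨n, hn1, hposn⟩ := hM_prim
  have i0 : Fin m := ⟨0, hm⟩
  -- determinant of 1 - M vanishes
  have hdet : ((1 : Matrix (Fin m) (Fin m) ℝ) - M).det = 0 := by
    have h1 : ((1 : Matrix (Fin m) (Fin m) ℝ) - Mᵀ).mulVec (fun _ => 1) = 0 := by
      funext i
      simp only [Matrix.sub_mulVec, Matrix.one_mulVec, Pi.sub_apply, Pi.zero_apply]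
      have : Mᵀ.mulVec (fun _ => (1 : ℝ)) i = 1 := by
        simp only [Matrix.mulVec, dotProduct, Matrix.transpose_apply, mul_one]
        exact hM_cols i
      rw [this]
      ring
    have hne1 : (fun _ => (1 : ℝ)) ≠ (0 : Fin m → ℝ) :=
      Function.ne_iff.mpr ⟨i0, by norm_num⟩
    have h2 : ((1 : Matrix (Fin m) (Fin m) ℝ) - Mᵀ).det = 0 :=
      Matrix.exists_mulVec_eq_zero_iff.mp ⟨fun _ => 1, hne1, h1⟩
    calc ((1 : Matrix (Fin m) (Fin m) ℝ) - M).det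
        = ((1 : Matrix (Fin m) (Fin m) ℝ) - M)ᵀ.det := (Matrix.det_transpose _).symm
      _ = ((1 : Matrix (Fin m) (Fin m) ℝ) - Mᵀ).det := by
          rw [Matrix.transpose_sub, Matrix.transpose_one]
      _ = 0 := h2
  -- (i)
  have hspec : (1 : ℝ) ∈ spectrum ℝ M := by
    rw [spectrum.mem_iff]
    intro hU
    have halg : (algebraMap ℝ (Matrix (Fin m) (Fin m) ℝ)) 1 - M
        = (1 : Matrix (Fin m) (Fin m) ℝ) - M := by rw [_root_.map_one]
    rw [halg, Matrix.isUnit_iff_isUnit_det, hdet] at hU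
    exact not_isUnit_zero hU
  -- (ii): construct positive eigenvector
  obtain ⟨v, hv0, hveq⟩ := Matrix.exists_mulVec_eq_zero_iff.mpr hdet
  have hfix : M.mulVec v = v := by
    rw [Matrix.sub_mulVec, Matrix.one_mulVec, sub_eq_zero] at hveq
    exact hveq.symm
  have habs := pf_abs_fixed hM_nonneg hM_cols hfix
  set u : Fin m → ℝ := fun i => |v i| with hu_def
  have hune : u ≠ 0 := by
    obtain ⟨i, hi⟩ := Function.ne_iff.mp hv0
    exact Function.ne_iff.mpr ⟨i, by simpa [hu_def, abs_eq_zero] using hi⟩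
  have hufix : (M ^ n).mulVec u = u := pf_pow_fixed habs n
  have hupos : ∀ i, 0 < u i := pf_pos_of_fixed hposn hufix (fun i => abs_nonneg _) hune
  set s : ℝ := ∑ i, u i with hs_def
  have hs : 0 < s := Finset.sum_pos (fun i _ => hupos i) ⟨i0, Finset.mem_univ i0⟩
  set v₁ : Fin m → ℝ := s⁻¹ • u with hv₁_def
  have hv₁fix : M.mulVec v₁ = v₁ := by
    rw [hv₁_def, Matrix.mulVec_smul, habs]
  have hv₁pos : ∀ i, 0 < v₁ i := fun i =>
    mul_pos (inv_pos.mpr hs) (hupos i)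
  have hv₁sum : ∑ i, v₁ i = 1 := by
    simp only [hv₁_def, Pi.smul_apply, smul_eq_mul]
    rw [← Finset.mul_sum, ← hs_def, inv_mul_cancel₀ hs.ne']
  have hv₁ne : v₁ ≠ 0 := fun h => (hv₁pos i0).ne' (by rw [h]; rfl)
  -- (iii): the eigenspace is spanned by v₁
  have hE : Module.End.eigenspace (Matrix.mulVecLin M) 1 = Submodule.span ℝ {v₁} := by
    apply le_antisymm
    · intro w hw
      rw [Module.End.mem_eigenspace_iff, one_smul, Matrix.mulVecLin_apply] at hw
      obtain ⟨i₀, -, hi₀⟩ := Finset.exists_min_image Finset.univ (fun i => w i / v₁ i)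
        ⟨i0, Finset.mem_univ i0⟩
      set t : ℝ := w i₀ / v₁ i₀ with ht_def
      set q : Fin m → ℝ := fun i => w i - t * v₁ i with hq_def
      have hqfun : q = w - t • v₁ := by
        funext i; simp [hq_def]
      have hqfix : M.mulVec q = q := by
        rw [hqfun, Matrix.mulVec_sub, Matrix.mulVec_smul, hw, hv₁fix]
      have hqnn : ∀ i, 0 ≤ q i := by
        intro i
        have h := hi₀ i (Finset.mem_univ i)
        have h2 : t * v₁ i ≤ w i := (le_div_iff₀ (hv₁pos i)).mp h
        simp only [hq_def]
        linarith
      have hq0 : q i₀ = 0 := by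
        simp only [hq_def, ht_def]
        rw [div_mul_cancel₀ _ (hv₁pos i₀).ne']
        ring
      have hqzero : ∀ j, q j = 0 := by
        have hqpow : (M ^ n).mulVec q = q := pf_pow_fixed hqfix n
        have h0 : ∑ j, (M ^ n) i₀ j * q j = 0 := by
          have := congrFun hqpow i₀
          simp only [Matrix.mulVec, dotProduct] at this
          rw [this, hq0]
        intro j
        have hj := (Finset.sum_eq_zero_iff_of_nonneg
          (fun j _ => mul_nonneg (hposn i₀ j).le (hqnn j))).mp h0 j (Finset.mem_univ j)
        have := hposn i₀ j
        rcases mul_eq_zero.mp hj with h | h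
        · exact absurd h this.ne'
        · exact h
      have hwt : w = t • v₁ := by
        funext i
        have := hqzero i
        simp only [hq_def] at this
        simp only [Pi.smul_apply, smul_eq_mul]
        linarith
      rw [Submodule.mem_span_singleton]
      exact ⟨t, hwt.symm⟩
    · rw [Submodule.span_le, Set.singleton_subset_iff]
      rw [SetLike.mem_coe, Module.End.mem_eigenspace_iff, one_smul, Matrix.mulVecLin_apply]
      exact hv₁fix
  have hrank : Module.finrank ℝ (Module.End.eigenspace (Matrix.mulVecLin M) 1) = 1 := by
    rw [hE]
    exact finrank_span_singleton hv₁ne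
  refine ⟨hspec, ⟨v₁, hv₁fix, hv₁pos, hv₁sum⟩, hrank, ?_⟩
  -- (iv)
  intro lam hlam hne
  set Ac : Matrix (Fin m) (Fin m) ℂ := M.map (algebraMap ℝ ℂ) with hAc_def
  have hmapow : ∀ k : ℕ, (M ^ k).map (algebraMap ℝ ℂ) = Ac ^ k := by
    intro k
    induction k with
    | zero => simp [Matrix.map_one]
    | succ k ih => rw [pow_succ, pow_succ, Matrix.map_mul, ih]
  rw [spectrum.mem_iff] at hlam
  have hdetc : ((algebraMap ℂ (Matrix (Fin m) (Fin m) ℂ)) lam - Ac).det = 0 := by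
    by_contra h
    exact hlam ((Matrix.isUnit_iff_isUnit_det _).mpr (isUnit_iff_ne_zero.mpr h))
  obtain ⟨z, hz0, hzeq⟩ := Matrix.exists_mulVec_eq_zero_iff.mpr hdetc
  have hzfix : Ac.mulVec z = lam • z := by
    rw [Algebra.algebraMap_eq_smul_one, Matrix.sub_mulVec, Matrix.smul_mulVec,
      Matrix.one_mulVec, sub_eq_zero] at hzeq
    exact hzeq.symm
  have hpowz : ∀ k, (Ac ^ k).mulVec z = (lam ^ k) • z := by
    intro k
    induction k with
    | zero => simp
    | succ k ih =>
      rw [pow_succ, ← Matrix.mulVec_mulVec, hzfix, Matrix.mulVec_smul, ih,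
        smul_smul, pow_succ, mul_comm]
  have hstoch : ∀ k j, ∑ i, (M ^ k) i j = 1 := pf_col_stoch_pow M hM_cols
  have hposn1 : ∀ i j, 0 < (M ^ (n + 1)) i j := by
    intro i j
    obtain ⟨k, hk⟩ : ∃ k, 0 < M k j := by
      by_contra h
      push_neg at h
      have : ∑ i, M i j = 0 :=
        Finset.sum_eq_zero fun i _ => le_antisymm (h i) (hM_nonneg i j)
      rw [hM_cols j] at this
      norm_num at this
    rw [pow_succ, Matrix.mul_apply]
    exact Finset.sum_pos' (fun l _ => mul_nonneg (hposn i l).le (hM_nonneg l j))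
      ⟨k, Finset.mem_univ k, mul_pos (hposn i k) hk⟩
  have key : ∀ k : ℕ, (∀ i j, 0 < (M ^ k) i j) →
      ‖lam ^ k‖ ≤ 1 ∧ (‖lam ^ k‖ = 1 → lam ^ k = 1) := by
    intro k hk
    exact pf_key_complex (M ^ k) hk (hstoch k) (lam ^ k) z hz0
      (by rw [hmapow k]; exact hpowz k)
  have h1 := key n hposn
  have h2 := key (n + 1) hposn1
  have habs_le : ‖lam‖ ≤ 1 := by
    have := h1.1
    rw [norm_pow] at this
    exact (pow_le_one_iff_of_nonneg (norm_nonneg _)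
      (Nat.one_le_iff_ne_zero.mp hn1)).mp this
  rcases lt_or_eq_of_le habs_le with h | h
  · exact h
  · exfalso
    have e1 : lam ^ n = 1 := h1.2 (by rw [norm_pow, h, one_pow])
    have e2 : lam ^ (n + 1) = 1 := h2.2 (by rw [norm_pow, h, one_pow])
    apply hne
    have hstep := pow_succ lam n
    rw [e1, e2, one_mul] at hstep
    exact hstep.symm
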